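/- For elements ω₁,…,ω_{2n} of a commutative ring and 0 ≤ j ≤ n, ρ_{n-j}(ω₁,…,ω_{2n}) = Σ over indices 0 ≤ s₁ < t₁ ≤ s₂ < t₂ ≤ ⋯ ≤ s_j < t_j ≤ n of ∏_{k=1}^j ω_{2s_k+1}·ω_{2t_k}. -/
import Mathlib


open Finset in
/-- `rho s l`: the sum over all ways of deleting `s` disjoint pairs of consecutive
elements from the sequence `l` of the product of the remaining elements.
(`rho 0 l` is the full product; `rho s l = 0` when `l.length < 2 * s`;
`rho s []` is `1` if `s = 0` and `0` otherwise.) -/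
noncomputable def rho {R : Type*} [CommRing R] (s : ℕ) (l : List R) : R :=
  ∑ S ∈ ((Finset.range (l.length - 1)).powersetCard s).filter
      (fun S => ∀ i ∈ S, i + 1 ∉ S),
    ∏ j ∈ (Finset.range l.length).filter (fun j => j ∉ S ∧ j - 1 ∉ S), l.getD j (0 : R)

open Finset

set_option linter.unusedSectionVars false

namespace RhoAux


/-- number of elements of `A` below `i` -/
def cnt (A : Finset ℕ) (i : ℕ) : ℕ := (A.filter (· < i)).card

/-- the remaining indices, i.e. those not covered by a deleted pair -/
def rem (S : Finset ℕ) (m : ℕ) : Finset ℕ :=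
  (Finset.range m).filter (fun x => x ∉ S ∧ x - 1 ∉ S)

/-- the covered indices below `i` -/
def cov (S : Finset ℕ) (i : ℕ) : ℕ :=
  ((Finset.range i).filter (fun x => ¬(x ∉ S ∧ x - 1 ∉ S))).card

lemma mem_rem {S : Finset ℕ} {m x : ℕ} :
    x ∈ rem S m ↔ x < m ∧ x ∉ S ∧ x - 1 ∉ S := by
  simp [rem]

lemma cnt_succ (A : Finset ℕ) (i : ℕ) :
    cnt A (i + 1) = cnt A i + if i ∈ A then 1 else 0 := by
  unfold cnt
  by_cases h : i ∈ A
  · rw [if_pos h]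
    have he : A.filter (· < i + 1) = insert i (A.filter (· < i)) := by
      ext x
      simp only [mem_filter, mem_insert]
      constructor
      · rintro ⟨hx, hlt⟩
        by_cases hxi : x = i
        · exact Or.inl hxi
        · exact Or.inr ⟨hx, by omega⟩
      · rintro (rfl | ⟨hx, hlt⟩)
        · exact ⟨h, by omega⟩
        · exact ⟨hx, by omega⟩
    rw [he, card_insert_of_notMem (by simp)]
  · rw [if_neg h, Nat.add_zero]
    congr 1
    ext x
    simp only [mem_filter]
    constructor
    · rintro ⟨hx, hlt⟩
      refine ⟨hx, ?_⟩
      rcases Nat.lt_succ_iff_lt_or_eq.mp hlt with h' | h'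
      · exact h'
      · exact absurd (h' ▸ hx) h
    · rintro ⟨hx, hlt⟩; exact ⟨hx, by omega⟩

lemma cnt_zero (A : Finset ℕ) : cnt A 0 = 0 := by simp [cnt]

lemma cnt_eq_card {A : Finset ℕ} {i : ℕ} (h : ∀ x ∈ A, x < i) : cnt A i = A.card := by
  unfold cnt
  rw [filter_true_of_mem h]

lemma cov_succ (S : Finset ℕ) (i : ℕ) :
    cov S (i + 1) = cov S i + if i ∈ S ∨ i - 1 ∈ S then 1 else 0 := by
  unfold cov
  rw [Finset.range_add_one, filter_insert]
  by_cases h : i ∈ S ∨ i - 1 ∈ S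
  · rw [if_pos (by tauto), if_pos h, card_insert_of_notMem (by simp)]
  · rw [if_neg (by tauto), if_neg h, Nat.add_zero]

/-- key counting: for a no-two-consecutive set, covered indices below `i`
count twice the deletions below `i`, except a correction when `i-1 ∈ S`. -/
lemma cov_spec {S : Finset ℕ} (hS : ∀ x ∈ S, x + 1 ∉ S) (i : ℕ) :
    cov S i + (if 0 < i ∧ i - 1 ∈ S then 1 else 0) = 2 * cnt S i := by
  induction i with
  | zero => simp [cov, cnt]
  | succ i ih =>
    rw [cov_succ, cnt_succ]
    by_cases h1 : i ∈ S
    · rw [if_pos (Or.inl h1), if_pos h1,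
        if_pos (show 0 < i + 1 ∧ i + 1 - 1 ∈ S from ⟨Nat.succ_pos i, by simpa using h1⟩)]
      rcases Nat.eq_zero_or_pos i with rfl | hpos
      · rw [if_neg (by simp)] at ih; omega
      · have h2 : i - 1 ∉ S := fun hm => hS (i-1) hm (by rwa [Nat.sub_add_cancel hpos]) 
        rw [if_neg (by tauto)] at ih; omega
    · rw [if_neg h1, if_neg (show ¬(0 < i + 1 ∧ i + 1 - 1 ∈ S) by simpa using h1)]
      by_cases h2 : i - 1 ∈ S
      · have hpos : 0 < i := by
          rcases Nat.eq_zero_or_pos i with rfl | h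
          · exact absurd (by simpa using h2) h1
          · exact h
        rw [if_pos (Or.inr h2)]
        rw [if_pos ⟨hpos, h2⟩] at ih
        omega
      · rw [if_neg (by tauto)]
        rw [if_neg (by tauto)] at ih
        omega

lemma cov_add_rem (S : Finset ℕ) (i : ℕ) : cov S i + (rem S i).card = i := by
  unfold cov rem
  rw [Nat.add_comm,
    Finset.card_filter_add_card_filter_not (fun x => x ∉ S ∧ x - 1 ∉ S)]
  exact Finset.card_range i

lemma cnt_rem {S : Finset ℕ} {m i : ℕ} (h : i ≤ m) :
    cnt (rem S m) i = (rem S i).card := by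
  unfold cnt
  congr 1
  ext x
  simp only [mem_filter, mem_rem]
  exact ⟨fun ⟨⟨_, hP⟩, h2⟩ => ⟨h2, hP⟩, fun ⟨h2, hP⟩ => ⟨⟨by omega, hP⟩, h2⟩⟩



def gset (R : Finset ℕ) (m : ℕ) : Finset ℕ :=
  (Finset.range m).filter (fun x => x ∉ R ∧ (x + cnt R x) % 2 = 0)

lemma mem_gset {R : Finset ℕ} {m x : ℕ} :
    x ∈ gset R m ↔ x < m ∧ x ∉ R ∧ (x + cnt R x) % 2 = 0 := by
  simp [gset]

lemma rem_card {S : Finset ℕ} {n : ℕ} (hsub : S ⊆ Finset.range (2*n - 1))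
    (hS : ∀ x ∈ S, x + 1 ∉ S) :
    (rem S (2*n)).card + 2 * S.card = 2*n := by
  have h1 := cov_add_rem S (2*n)
  have h2 := cov_spec hS (2*n)
  have h3 : cnt S (2*n) = S.card :=
    cnt_eq_card (fun x hx => by have := mem_range.mp (hsub hx); omega)
  have h4 : ¬(0 < 2*n ∧ 2*n - 1 ∈ S) := by
    rintro ⟨_, hmem⟩
    have := mem_range.mp (hsub hmem); omega
  rw [if_neg h4, h3] at h2
  omega

lemma rem_good {S : Finset ℕ} {n : ℕ} (hS : ∀ x ∈ S, x + 1 ∉ S)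
    {r : ℕ} (hr : r ∈ rem S (2*n)) :
    cnt (rem S (2*n)) r % 2 = r % 2 := by
  obtain ⟨hrlt, hrS, hr1S⟩ := mem_rem.mp hr
  rw [cnt_rem (le_of_lt hrlt)]
  have h1 := cov_add_rem S r
  have h2 := cov_spec hS r
  have h4 : ¬(0 < r ∧ r - 1 ∈ S) := by rintro ⟨_, hmem⟩; exact hr1S hmem
  rw [if_neg h4] at h2
  omega

lemma gset_noconsec (R : Finset ℕ) (m : ℕ) :
    ∀ x ∈ gset R m, x + 1 ∉ gset R m := by
  intro x hx hx1
  obtain ⟨_, hxR, hxp⟩ := mem_gset.mp hx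
  obtain ⟨_, _, hx1p⟩ := mem_gset.mp hx1
  rw [cnt_succ, if_neg hxR] at hx1p
  omega

lemma gset_rem {S : Finset ℕ} {n : ℕ} (hsub : S ⊆ Finset.range (2*n - 1))
    (hS : ∀ x ∈ S, x + 1 ∉ S) :
    gset (rem S (2*n)) (2*n - 1) = S := by
  ext i
  rw [mem_gset]
  constructor
  · rintro ⟨hi, hnotrem, hpar⟩
    by_contra hiS
    have hd : i - 1 ∈ S := by
      by_contra h1
      exact hnotrem (mem_rem.mpr ⟨by omega, hiS, h1⟩)
    have hipos : 0 < i := by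
      rcases Nat.eq_zero_or_pos i with rfl | h
      · exact (hiS (by simpa using hd)).elim
      · exact h
    rw [cnt_rem (by omega : i ≤ 2*n)] at hpar
    have h1 := cov_add_rem S i
    have h2 := cov_spec hS i
    rw [if_pos ⟨hipos, hd⟩] at h2
    omega
  · intro hiS
    have hilt : i < 2*n - 1 := mem_range.mp (hsub hiS)
    refine ⟨hilt, fun hmem => (mem_rem.mp hmem).2.1 hiS, ?_⟩
    rw [cnt_rem (by omega : i ≤ 2*n)]
    have h1 := cov_add_rem S i
    have h2 := cov_spec hS i
    have h4 : ¬(0 < i ∧ i - 1 ∈ S) := by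
      rintro ⟨hpos, hmem⟩
      exact hS (i-1) hmem (by rwa [Nat.sub_add_cancel hpos])
    rw [if_neg h4] at h2
    omega

lemma rem_gset {R : Finset ℕ} {n j : ℕ} (hsub : R ⊆ Finset.range (2*n))
    (hcard : R.card = 2*j)
    (hgood : ∀ r ∈ R, cnt R r % 2 = r % 2) :
    rem (gset R (2*n - 1)) (2*n) = R := by
  ext i
  rw [mem_rem]
  constructor
  · rintro ⟨hi2n, hnot, hnot1⟩
    by_contra hiR
    rw [mem_gset.not] at hnot
    push_neg at hnot
    by_cases hcase : i < 2*n - 1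
    · have hpar : (i + cnt R i) % 2 = 1 := by
        have := hnot hcase hiR
        omega
      rcases Nat.eq_zero_or_pos i with rfl | hipos
      · rw [cnt_zero] at hpar; omega
      · rw [mem_gset.not] at hnot1
        push_neg at hnot1
        have hstep : cnt R i = cnt R (i-1) + if i - 1 ∈ R then 1 else 0 := by
          have := cnt_succ R (i-1)
          rwa [Nat.sub_add_cancel hipos] at this
        by_cases hmem : i - 1 ∈ R
        · have := hgood (i-1) hmem
          rw [if_pos hmem] at hstep
          omega
        · have hpar1 : (i - 1 + cnt R (i-1)) % 2 = 1 := by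
            have := hnot1 (by omega) hmem
            omega
          rw [if_neg hmem] at hstep
          omega
    · -- i = 2n - 1
      have hieq : i = 2*n - 1 := by omega
      have hnpos : 0 < n := by omega
      have htot : cnt R (2*n) = 2*j := by
        rw [cnt_eq_card (fun x hx => mem_range.mp (hsub hx)), hcard]
      have hstep : cnt R (2*n) = cnt R (2*n-1) + if 2*n - 1 ∈ R then 1 else 0 := by
        have := cnt_succ R (2*n-1)
        rwa [Nat.sub_add_cancel (by omega : 1 ≤ 2*n)] at this
      rw [if_neg (hieq ▸ hiR)] at hstep
      have hstep2 : cnt R (2*n-1) = cnt R (2*n-2) + if 2*n - 2 ∈ R then 1 else 0 := by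
        have := cnt_succ R (2*n-2)
        have h22 : 2*n - 2 + 1 = 2*n - 1 := by omega
        rwa [h22] at this
      rw [mem_gset.not] at hnot1
      push_neg at hnot1
      have h1i : i - 1 = 2*n - 2 := by omega
      by_cases hmem : 2*n - 2 ∈ R
      · have := hgood (2*n-2) hmem
        rw [if_pos hmem] at hstep2
        omega
      · have hpar1 : (2*n - 2 + cnt R (2*n-2)) % 2 = 1 := by
          have := hnot1 (h1i ▸ (by omega : i - 1 < 2*n - 1)) (h1i ▸ hmem)
          rw [h1i] at this
          omega
        rw [if_neg hmem] at hstep2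
        omega
  · intro hiR
    have hilt : i < 2*n := mem_range.mp (hsub hiR)
    refine ⟨hilt, fun hmem => (mem_gset.mp hmem).2.1 hiR, ?_⟩
    rcases Nat.eq_zero_or_pos i with rfl | hipos
    · intro hmem
      exact (mem_gset.mp hmem).2.1 hiR
    · intro hmem
      obtain ⟨hlt1, hnotR1, hpar1⟩ := mem_gset.mp hmem
      have hstep : cnt R i = cnt R (i-1) + if i - 1 ∈ R then 1 else 0 := by
        have := cnt_succ R (i-1)
        rwa [Nat.sub_add_cancel hipos] at this
      rw [if_neg hnotR1] at hstep
      have := hgood i hiR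
      omega

lemma gset_card {R : Finset ℕ} {n j : ℕ} (hj : j ≤ n) (hsub : R ⊆ Finset.range (2*n))
    (hcard : R.card = 2*j)
    (hgood : ∀ r ∈ R, cnt R r % 2 = r % 2) :
    (gset R (2*n - 1)).card = n - j := by
  have h1 : gset R (2*n-1) ⊆ Finset.range (2*n-1) := filter_subset _ _
  have h2 := rem_card h1 (gset_noconsec R (2*n-1))
  rw [rem_gset hsub hcard hgood, hcard] at h2
  omega




theorem rho_eq_good_sum {K : Type*} [CommRing K] {n j : ℕ} (hj : j ≤ n)
    (w : List K) (hw : w.length = 2*n) :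
    rho (n - j) w =
      ∑ A ∈ ((Finset.range (2*n)).powersetCard (2*j)).filter
          (fun A => ∀ r ∈ A, cnt A r % 2 = r % 2),
        ∏ x ∈ A, w.getD x 0 := by
  unfold rho
  rw [hw]
  refine Finset.sum_nbij' (fun S => rem S (2*n)) (fun A => gset A (2*n-1)) ?_ ?_ ?_ ?_ ?_
  · intro S hS
    simp only [mem_filter, mem_powersetCard, mem_range] at hS ⊢
    obtain ⟨⟨hsub, hcard⟩, hnc⟩ := hS
    refine ⟨⟨filter_subset _ _, ?_⟩, fun r hr => rem_good hnc hr⟩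
    have := rem_card hsub hnc
    omega
  · intro A hA
    simp only [mem_filter, mem_powersetCard] at hA ⊢
    obtain ⟨⟨hsub, hcard⟩, hgood⟩ := hA
    exact ⟨⟨filter_subset _ _, gset_card hj hsub hcard hgood⟩, gset_noconsec A _⟩
  · intro S hS
    simp only [mem_filter, mem_powersetCard] at hS
    exact gset_rem hS.1.1 hS.2
  · intro A hA
    simp only [mem_filter, mem_powersetCard] at hA
    exact rem_gset hA.1.1 hA.1.2 hA.2
  · intro S hS
    rfl






lemma getD_sort {A : Finset ℕ} {k : ℕ} (h : A.card = k) (m : Fin k) :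
    (A.sort (· ≤ ·)).getD (m : ℕ) 0 = A.orderEmbOfFin h m := by
  rw [Finset.orderEmbOfFin_apply]
  have hlen : (m : ℕ) < (A.sort (· ≤ ·)).length := by
    rw [Finset.length_sort, h]; exact m.isLt
  simp [List.getD_eq_getElem?_getD, List.getElem?_eq_getElem hlen]

lemma fin_card_filter_lt (j m : ℕ) (hm : m ≤ j) :
    ((Finset.univ : Finset (Fin j)).filter (fun x : Fin j => (x : ℕ) < m)).card = m := by
  have himg : (Finset.univ.filter (fun x : Fin j => (x : ℕ) < m)).image Fin.val
      = Finset.range m := by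
    ext y
    simp only [mem_image, mem_filter, mem_univ, true_and, mem_range]
    constructor
    · rintro ⟨x, hx, rfl⟩; exact hx
    · intro hy; exact ⟨⟨y, by omega⟩, hy, rfl⟩
  have := Finset.card_image_of_injective
    (Finset.univ.filter (fun x : Fin j => (x : ℕ) < m)) Fin.val_injective
  rw [himg, Finset.card_range] at this
  omega

lemma cnt_orderEmb {A : Finset ℕ} {k : ℕ} (h : A.card = k) (m : Fin k) :
    cnt A (A.orderEmbOfFin h m) = (m : ℕ) := by
  set e := A.orderEmbOfFin h with he
  unfold cnt
  have himg : A.filter (· < e m)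
      = (Finset.univ.filter (fun x : Fin k => (x : ℕ) < (m : ℕ))).image (fun x => e x) := by
    ext y
    simp only [mem_filter, mem_image, mem_univ, true_and]
    constructor
    · rintro ⟨hyA, hlt⟩
      have : y ∈ Set.range e := by rw [he, Finset.range_orderEmbOfFin]; exact hyA
      obtain ⟨x, rfl⟩ := this
      exact ⟨x, Fin.lt_def.mp (e.strictMono.lt_iff_lt.mp hlt), rfl⟩
    · rintro ⟨x, hx, rfl⟩
      exact ⟨Finset.orderEmbOfFin_mem A h x,
        e.strictMono (Fin.lt_def.mpr hx)⟩
  rw [himg, Finset.card_image_of_injective _ e.injective,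
    fin_card_filter_lt k (m : ℕ) (le_of_lt m.isLt)]

section pairs
variable {n j : ℕ} {p : (Fin j → Fin (n+1)) × (Fin j → Fin (n+1))}

/-- the set of remaining indices corresponding to an interleaved pair family -/
def psi (p : (Fin j → Fin (n+1)) × (Fin j → Fin (n+1))) : Finset ℕ :=
  (Finset.univ.image fun k => 2 * ((p.1 k : ℕ))) ∪
    (Finset.univ.image fun k => 2 * ((p.2 k : ℕ)) - 1)

variable (hlt : ∀ k : Fin j, (p.1 k : ℕ) < (p.2 k : ℕ))
  (hle : ∀ (k : Fin j) (h : (k : ℕ) + 1 < j), (p.2 k : ℕ) ≤ (p.1 ⟨(k : ℕ) + 1, h⟩ : ℕ))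

include hlt hle

lemma mono_s : ∀ a b : Fin j, (a : ℕ) < (b : ℕ) → (p.1 a : ℕ) < (p.1 b : ℕ) := by
  have step : ∀ a b : Fin j, (b : ℕ) = (a : ℕ) + 1 → (p.1 a : ℕ) < (p.1 b : ℕ) := by
    intro a b hab
    have h1 : (a : ℕ) + 1 < j := hab ▸ b.isLt
    have h2 := hle a h1
    have h3 := hlt a
    have hb : b = ⟨(a : ℕ) + 1, h1⟩ := Fin.ext hab
    rw [hb]; omega
  have aux : ∀ (d : ℕ) (a b : Fin j), (b : ℕ) = (a : ℕ) + 1 + d → (p.1 a : ℕ) < (p.1 b : ℕ) := by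
    intro d
    induction d with
    | zero => intro a b hb; exact step a b (by omega)
    | succ d ih =>
      intro a b hb
      have hb' : (a : ℕ) + 1 + d < j := by have := b.isLt; omega
      have h1 := ih a ⟨(a : ℕ) + 1 + d, hb'⟩ (by simp)
      have h2 := step ⟨(a : ℕ) + 1 + d, hb'⟩ b (by simp; omega)
      omega
  intro a b hab
  exact aux ((b : ℕ) - (a : ℕ) - 1) a b (by omega)

lemma mono_t : ∀ a b : Fin j, (a : ℕ) < (b : ℕ) → (p.2 a : ℕ) < (p.2 b : ℕ) := by
  have step : ∀ a b : Fin j, (b : ℕ) = (a : ℕ) + 1 → (p.2 a : ℕ) < (p.2 b : ℕ) := by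
    intro a b hab
    have h1 : (a : ℕ) + 1 < j := hab ▸ b.isLt
    have h2 := hle a h1
    have h3 := hlt ⟨(a : ℕ) + 1, h1⟩
    have hb : b = ⟨(a : ℕ) + 1, h1⟩ := Fin.ext hab
    rw [hb]; omega
  have aux : ∀ (d : ℕ) (a b : Fin j), (b : ℕ) = (a : ℕ) + 1 + d → (p.2 a : ℕ) < (p.2 b : ℕ) := by
    intro d
    induction d with
    | zero => intro a b hb; exact step a b (by omega)
    | succ d ih =>
      intro a b hb
      have hb' : (a : ℕ) + 1 + d < j := by have := b.isLt; omega
      have h1 := ih a ⟨(a : ℕ) + 1 + d, hb'⟩ (by simp)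
      have h2 := step ⟨(a : ℕ) + 1 + d, hb'⟩ b (by simp; omega)
      omega
  intro a b hab
  exact aux ((b : ℕ) - (a : ℕ) - 1) a b (by omega)

lemma cross_ts : ∀ a b : Fin j, (a : ℕ) < (b : ℕ) → (p.2 a : ℕ) ≤ (p.1 b : ℕ) := by
  intro a b hab
  have h1 : (a : ℕ) + 1 < j := by have := b.isLt; omega
  have h2 := hle a h1
  rcases Nat.lt_or_ge ((a : ℕ) + 1) (b : ℕ) with h | h
  · have := mono_s hlt hle ⟨(a : ℕ) + 1, h1⟩ b (by simpa using h)
    omega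
  · have hb : b = ⟨(a : ℕ) + 1, h1⟩ := Fin.ext (show (b:ℕ) = (a:ℕ)+1 by omega)
    rw [hb]; omega

lemma cross_st : ∀ a b : Fin j, (a : ℕ) ≤ (b : ℕ) → (p.1 a : ℕ) < (p.2 b : ℕ) := by
  intro a b hab
  rcases Nat.lt_or_ge (a : ℕ) (b : ℕ) with h | h
  · have h1 := mono_s hlt hle a b h
    have := hlt b
    omega
  · have hb : b = a := Fin.ext (show (b:ℕ) = (a:ℕ) by omega)
    rw [hb]; exact hlt a

lemma mono_s_le : ∀ a b : Fin j, (a : ℕ) ≤ (b : ℕ) → (p.1 a : ℕ) ≤ (p.1 b : ℕ) := by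
  intro a b hab
  rcases Nat.lt_or_ge (a : ℕ) (b : ℕ) with h | h
  · exact le_of_lt (mono_s hlt hle a b h)
  · have hb : b = a := Fin.ext (show (b:ℕ) = (a:ℕ) by omega)
    rw [hb]

lemma mono_t_le : ∀ a b : Fin j, (a : ℕ) ≤ (b : ℕ) → (p.2 a : ℕ) ≤ (p.2 b : ℕ) := by
  intro a b hab
  rcases Nat.lt_or_ge (a : ℕ) (b : ℕ) with h | h
  · exact le_of_lt (mono_t hlt hle a b h)
  · have hb : b = a := Fin.ext (show (b:ℕ) = (a:ℕ) by omega)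
    rw [hb]

lemma inj_s : Function.Injective (fun k : Fin j => 2 * (p.1 k : ℕ)) := by
  intro a b hab
  simp only at hab
  by_contra hne
  rcases Nat.lt_or_ge (a : ℕ) (b : ℕ) with h | h
  · have := mono_s hlt hle a b h; omega
  · have h' : (b : ℕ) < (a : ℕ) := by
      rcases Nat.lt_or_ge (b : ℕ) (a : ℕ) with h' | h'
      · exact h'
      · exact absurd (Fin.ext (by omega) : a = b) hne
    have := mono_s hlt hle b a h'; omega

lemma inj_t : Function.Injective (fun k : Fin j => 2 * (p.2 k : ℕ) - 1) := by
  intro a b hab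
  simp only at hab
  have ha := hlt a
  have hb' := hlt b
  by_contra hne
  rcases Nat.lt_or_ge (a : ℕ) (b : ℕ) with h | h
  · have := mono_t hlt hle a b h; omega
  · have h' : (b : ℕ) < (a : ℕ) := by
      rcases Nat.lt_or_ge (b : ℕ) (a : ℕ) with h' | h'
      · exact h'
      · exact absurd (Fin.ext (by omega) : a = b) hne
    have := mono_t hlt hle b a h'; omega

lemma psi_disj :
    Disjoint (Finset.univ.image fun k : Fin j => 2 * ((p.1 k : ℕ)))
      (Finset.univ.image fun k : Fin j => 2 * ((p.2 k : ℕ)) - 1) := by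
  rw [Finset.disjoint_left]
  intro a ha hb
  simp only [mem_image, mem_univ, true_and] at ha hb
  obtain ⟨k, hk⟩ := ha
  obtain ⟨k', hk'⟩ := hb
  have := hlt k'
  omega

lemma psi_card : (psi p).card = 2 * j := by
  unfold psi
  rw [Finset.card_union_of_disjoint (psi_disj hlt hle),
    Finset.card_image_of_injective _ (inj_s hlt hle),
    Finset.card_image_of_injective _ (inj_t hlt hle)]
  simp [Finset.card_univ]
  omega

lemma psi_subset {N : ℕ} (hn : n ≤ N) : psi p ⊆ Finset.range (2 * N) := by
  unfold psi
  intro x hx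
  rw [Finset.mem_union] at hx
  rw [Finset.mem_range]
  rcases hx with hx | hx <;> simp only [mem_image, mem_univ, true_and] at hx <;>
    obtain ⟨k, rfl⟩ := hx
  · have h1 := hlt k
    have h2 := (p.2 k).isLt
    omega
  · have h1 := hlt k
    have h2 := (p.2 k).isLt
    omega

lemma cnt_psi_s (k : Fin j) : cnt (psi p) (2 * (p.1 k : ℕ)) = 2 * (k : ℕ) := by
  unfold cnt psi
  rw [Finset.filter_union,
    Finset.card_union_of_disjoint (Finset.disjoint_filter_filter (psi_disj hlt hle)),
    Finset.filter_image, Finset.filter_image,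
    Finset.card_image_of_injective _ (inj_s hlt hle),
    Finset.card_image_of_injective _ (inj_t hlt hle)]
  have e1 : Finset.univ.filter (fun k' : Fin j => 2 * (p.1 k' : ℕ) < 2 * (p.1 k : ℕ))
      = Finset.univ.filter (fun k' : Fin j => (k' : ℕ) < (k : ℕ)) := by
    apply Finset.filter_congr
    intro k' _
    constructor
    · intro h
      by_contra h'
      have := mono_s_le hlt hle k k' (by omega)
      omega
    · intro h
      have := mono_s hlt hle k' k h
      omega
  have e2 : Finset.univ.filter (fun k' : Fin j => 2 * (p.2 k' : ℕ) - 1 < 2 * (p.1 k : ℕ))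
      = Finset.univ.filter (fun k' : Fin j => (k' : ℕ) < (k : ℕ)) := by
    apply Finset.filter_congr
    intro k' _
    have h1 := hlt k'
    constructor
    · intro h
      by_contra h'
      have h2 := mono_s_le hlt hle k k' (by omega)
      have h3 := hlt k'
      omega
    · intro h
      have := cross_ts hlt hle k' k h
      omega
  rw [e1, e2, fin_card_filter_lt j (k : ℕ) (le_of_lt k.isLt)]
  omega

lemma cnt_psi_t (k : Fin j) : cnt (psi p) (2 * (p.2 k : ℕ) - 1) = 2 * (k : ℕ) + 1 := by
  unfold cnt psi
  rw [Finset.filter_union,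
    Finset.card_union_of_disjoint (Finset.disjoint_filter_filter (psi_disj hlt hle)),
    Finset.filter_image, Finset.filter_image,
    Finset.card_image_of_injective _ (inj_s hlt hle),
    Finset.card_image_of_injective _ (inj_t hlt hle)]
  have e1 : Finset.univ.filter (fun k' : Fin j => 2 * (p.1 k' : ℕ) < 2 * (p.2 k : ℕ) - 1)
      = Finset.univ.filter (fun k' : Fin j => (k' : ℕ) < (k : ℕ) + 1) := by
    apply Finset.filter_congr
    intro k' _
    have h0 := hlt k
    constructor
    · intro h
      by_contra h'
      have := cross_ts hlt hle k k' (by omega)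
      omega
    · intro h
      have := cross_st hlt hle k' k (by omega)
      omega
  have e2 : Finset.univ.filter (fun k' : Fin j => 2 * (p.2 k' : ℕ) - 1 < 2 * (p.2 k : ℕ) - 1)
      = Finset.univ.filter (fun k' : Fin j => (k' : ℕ) < (k : ℕ)) := by
    apply Finset.filter_congr
    intro k' _
    have h1 := hlt k'
    have h2 := hlt k
    constructor
    · intro h
      by_contra h'
      have := mono_t_le hlt hle k k' (by omega)
      omega
    · intro h
      have := mono_t hlt hle k' k h
      omega
  rw [e1, e2, fin_card_filter_lt j ((k : ℕ) + 1) (by omega),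
    fin_card_filter_lt j (k : ℕ) (le_of_lt k.isLt)]
  omega

lemma psi_good : ∀ r ∈ psi p, cnt (psi p) r % 2 = r % 2 := by
  intro r hr
  unfold psi at hr
  rw [Finset.mem_union] at hr
  rcases hr with hr | hr <;> simp only [mem_image, mem_univ, true_and] at hr <;>
    obtain ⟨k, rfl⟩ := hr
  · rw [cnt_psi_s hlt hle k]; omega
  · rw [cnt_psi_t hlt hle k]
    have := hlt k
    omega

end pairs


section sets
variable {n j : ℕ}

/-- half of an index below `2*j` -/
def half {j : ℕ} (m : Fin (2*j)) : Fin j := ⟨(m : ℕ)/2, by have := m.isLt; omega⟩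

lemma half_val {j : ℕ} (m : Fin (2*j)) : (half m : ℕ) = (m : ℕ)/2 := rfl

def phi1 (n j : ℕ) (A : Finset ℕ) : Fin j → Fin (n+1) := fun k =>
  ⟨((A.sort (· ≤ ·)).getD (2*(k : ℕ)) 0) / 2 % (n+1), Nat.mod_lt _ n.succ_pos⟩

def phi2 (n j : ℕ) (A : Finset ℕ) : Fin j → Fin (n+1) := fun k =>
  ⟨(((A.sort (· ≤ ·)).getD (2*(k : ℕ)+1) 0) + 1) / 2 % (n+1), Nat.mod_lt _ n.succ_pos⟩

lemma getD_sort' {A : Finset ℕ} {k : ℕ} (h : A.card = k) (m : ℕ) (hm : m < k) :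
    (A.sort (· ≤ ·)).getD m 0 = A.orderEmbOfFin h ⟨m, hm⟩ :=
  getD_sort h ⟨m, hm⟩

variable {A : Finset ℕ} (hsub : A ⊆ Finset.range (2*n)) (hcard : A.card = 2*j)
  (hgood : ∀ r ∈ A, cnt A r % 2 = r % 2)

include hsub hcard in
lemma emb_lt (m : Fin (2*j)) : (A.orderEmbOfFin hcard m : ℕ) < 2*n :=
  Finset.mem_range.mp (hsub (Finset.orderEmbOfFin_mem A hcard m))

include hcard hgood in
lemma emb_parity (m : Fin (2*j)) :
    (A.orderEmbOfFin hcard m : ℕ) % 2 = (m : ℕ) % 2 := by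
  have h1 := hgood _ (Finset.orderEmbOfFin_mem A hcard m)
  rw [cnt_orderEmb hcard m] at h1
  omega

include hsub hcard in
lemma phi1_val (k : Fin j) (h2k : 2*(k : ℕ) < 2*j) :
    (phi1 n j A k : ℕ) = (A.orderEmbOfFin hcard ⟨2*(k : ℕ), h2k⟩ : ℕ) / 2 := by
  show ((A.sort (· ≤ ·)).getD (2*(k : ℕ)) 0) / 2 % (n+1) = _
  rw [getD_sort' hcard (2*(k : ℕ)) h2k]
  exact Nat.mod_eq_of_lt (by have := emb_lt hsub hcard ⟨2*(k : ℕ), h2k⟩; omega)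

include hsub hcard in
lemma phi2_val (k : Fin j) (h2k : 2*(k : ℕ)+1 < 2*j) :
    (phi2 n j A k : ℕ) = ((A.orderEmbOfFin hcard ⟨2*(k : ℕ)+1, h2k⟩ : ℕ) + 1) / 2 := by
  show (((A.sort (· ≤ ·)).getD (2*(k : ℕ)+1) 0) + 1) / 2 % (n+1) = _
  rw [getD_sort' hcard (2*(k : ℕ)+1) h2k]
  exact Nat.mod_eq_of_lt (by have := emb_lt hsub hcard ⟨2*(k : ℕ)+1, h2k⟩; omega)

include hsub hcard hgood in
lemma phi_cond1 (k : Fin j) : (phi1 n j A k : ℕ) < (phi2 n j A k : ℕ) := by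
  have hk := k.isLt
  have h2k : 2*(k : ℕ) < 2*j := by omega
  have h2k1 : 2*(k : ℕ)+1 < 2*j := by omega
  rw [phi1_val hsub hcard k h2k, phi2_val hsub hcard k h2k1]
  have hmono : (A.orderEmbOfFin hcard ⟨2*(k : ℕ), h2k⟩ : ℕ)
      < A.orderEmbOfFin hcard ⟨2*(k : ℕ)+1, h2k1⟩ :=
    (A.orderEmbOfFin hcard).strictMono (Fin.mk_lt_mk.mpr (by omega))
  have hp1 := emb_parity hcard hgood ⟨2*(k : ℕ), h2k⟩
  have hp2 := emb_parity hcard hgood ⟨2*(k : ℕ)+1, h2k1⟩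
  simp only [Fin.val_mk] at hp1 hp2
  omega

include hsub hcard hgood in
lemma phi_cond2 (k : Fin j) (h : (k : ℕ) + 1 < j) :
    (phi2 n j A k : ℕ) ≤ (phi1 n j A ⟨(k : ℕ)+1, h⟩ : ℕ) := by
  have hk := k.isLt
  have h2k1 : 2*(k : ℕ)+1 < 2*j := by omega
  have h2k2 : 2*((⟨(k : ℕ)+1, h⟩ : Fin j) : ℕ) < 2*j := by
    simp only [Fin.val_mk]; omega
  rw [phi2_val hsub hcard k h2k1, phi1_val hsub hcard ⟨(k : ℕ)+1, h⟩ h2k2]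
  have hmono : (A.orderEmbOfFin hcard ⟨2*(k : ℕ)+1, h2k1⟩ : ℕ)
      < A.orderEmbOfFin hcard ⟨2*((⟨(k : ℕ)+1, h⟩ : Fin j) : ℕ), h2k2⟩ :=
    (A.orderEmbOfFin hcard).strictMono (Fin.mk_lt_mk.mpr (by simp only [Fin.val_mk]; omega))
  have hp1 := emb_parity hcard hgood ⟨2*(k : ℕ)+1, h2k1⟩
  have hp2 := emb_parity hcard hgood ⟨2*((⟨(k : ℕ)+1, h⟩ : Fin j) : ℕ), h2k2⟩
  simp only [Fin.val_mk] at hp1 hp2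
  omega

include hsub hcard hgood in
lemma psi_phi : psi (phi1 n j A, phi2 n j A) = A := by
  ext x
  unfold psi
  simp only [Finset.mem_union, Finset.mem_image, Finset.mem_univ, true_and]
  constructor
  · rintro (⟨k, rfl⟩ | ⟨k, rfl⟩)
    · have hk := k.isLt
      have h2k : 2*(k : ℕ) < 2*j := by omega
      rw [phi1_val hsub hcard k h2k]
      have hp := emb_parity hcard hgood ⟨2*(k : ℕ), h2k⟩
      simp only [Fin.val_mk] at hp
      have heq : 2 * ((A.orderEmbOfFin hcard ⟨2*(k : ℕ), h2k⟩ : ℕ) / 2)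
          = (A.orderEmbOfFin hcard ⟨2*(k : ℕ), h2k⟩ : ℕ) := by omega
      rw [heq]
      exact Finset.orderEmbOfFin_mem A hcard _
    · have hk := k.isLt
      have h2k1 : 2*(k : ℕ)+1 < 2*j := by omega
      rw [phi2_val hsub hcard k h2k1]
      have hp := emb_parity hcard hgood ⟨2*(k : ℕ)+1, h2k1⟩
      simp only [Fin.val_mk] at hp
      have heq : 2 * (((A.orderEmbOfFin hcard ⟨2*(k : ℕ)+1, h2k1⟩ : ℕ) + 1) / 2) - 1
          = (A.orderEmbOfFin hcard ⟨2*(k : ℕ)+1, h2k1⟩ : ℕ) := by omega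
      rw [heq]
      exact Finset.orderEmbOfFin_mem A hcard _
  · intro hx
    have hrange : x ∈ Set.range (A.orderEmbOfFin hcard) := by
      rw [Finset.range_orderEmbOfFin]; exact hx
    obtain ⟨m, hm⟩ := hrange
    have hpar := emb_parity hcard hgood m
    rw [hm] at hpar
    have hmlt := m.isLt
    by_cases hm2 : (m : ℕ) % 2 = 0
    · left
      refine ⟨half m, ?_⟩
      have h2k : 2*((half m : ℕ)) < 2*j := by rw [half_val]; omega
      rw [phi1_val hsub hcard (half m) h2k]
      have hmk : (⟨2*((half m : ℕ)), h2k⟩ : Fin (2*j)) = m :=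
        Fin.ext (show 2*((half m : ℕ)) = (m : ℕ) by rw [half_val]; omega)
      rw [hmk, hm]
      omega
    · right
      refine ⟨half m, ?_⟩
      have h2k1 : 2*((half m : ℕ))+1 < 2*j := by rw [half_val]; omega
      rw [phi2_val hsub hcard (half m) h2k1]
      have hmk : (⟨2*((half m : ℕ))+1, h2k1⟩ : Fin (2*j)) = m :=
        Fin.ext (show 2*((half m : ℕ))+1 = (m : ℕ) by rw [half_val]; omega)
      rw [hmk, hm]
      omega

end sets

section leftinv
variable {n j : ℕ} {p : (Fin j → Fin (n+1)) × (Fin j → Fin (n+1))}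
  (hlt : ∀ k : Fin j, (p.1 k : ℕ) < (p.2 k : ℕ))
  (hle : ∀ (k : Fin j) (h : (k : ℕ) + 1 < j), (p.2 k : ℕ) ≤ (p.1 ⟨(k : ℕ) + 1, h⟩ : ℕ))

/-- the interleaving enumeration of `psi p` -/
def interleave (p : (Fin j → Fin (n+1)) × (Fin j → Fin (n+1))) : Fin (2*j) → ℕ :=
  fun m => if (m : ℕ) % 2 = 0 then 2 * ((p.1 (half m) : ℕ)) else 2 * ((p.2 (half m) : ℕ)) - 1

include hlt hle in
lemma interleave_mono : StrictMono (interleave p) := by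
  intro a b hab
  have hab' : (a : ℕ) < (b : ℕ) := hab
  have hha := half_val a
  have hhb := half_val b
  unfold interleave
  by_cases h1 : (a : ℕ) % 2 = 0 <;> by_cases h2 : (b : ℕ) % 2 = 0
  · rw [if_pos h1, if_pos h2]
    have := mono_s hlt hle (half a) (half b) (by omega)
    omega
  · rw [if_pos h1, if_neg h2]
    have := cross_st hlt hle (half a) (half b) (by omega)
    omega
  · rw [if_neg h1, if_pos h2]
    have h3 := cross_ts hlt hle (half a) (half b) (by omega)
    have h4 := hlt (half a)
    omega
  · rw [if_neg h1, if_neg h2]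
    have h3 := mono_t hlt hle (half a) (half b) (by omega)
    have h4 := hlt (half a)
    omega

include hlt hle in
lemma interleave_mem : ∀ m, interleave p m ∈ psi p := by
  intro m
  unfold interleave psi
  by_cases h : (m : ℕ) % 2 = 0
  · rw [if_pos h]
    exact Finset.mem_union_left _ (Finset.mem_image_of_mem _ (Finset.mem_univ _))
  · rw [if_neg h]
    exact Finset.mem_union_right _ (Finset.mem_image_of_mem _ (Finset.mem_univ _))

include hlt hle in
lemma interleave_eq_emb :
    ∀ m, interleave p m = (psi p).orderEmbOfFin (psi_card hlt hle) m := by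
  intro m
  rw [← Finset.orderEmbOfFin_unique (psi_card hlt hle) (interleave_mem hlt hle)
    (interleave_mono hlt hle)]

include hlt hle in
lemma phi_psi_1 : phi1 n j (psi p) = p.1 := by
  funext k
  apply Fin.ext
  have hk := k.isLt
  have h2k : 2*(k : ℕ) < 2*j := by omega
  rw [phi1_val (psi_subset hlt hle (le_refl n)) (psi_card hlt hle) k h2k]
  rw [← interleave_eq_emb hlt hle ⟨2*(k : ℕ), h2k⟩]
  unfold interleave
  rw [if_pos (by simp only [Fin.val_mk]; omega)]
  have hhalf : half (⟨2*(k : ℕ), h2k⟩ : Fin (2*j)) = k :=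
    Fin.ext (show (2*(k : ℕ))/2 = (k : ℕ) by omega)
  rw [hhalf]
  omega

include hlt hle in
lemma phi_psi_2 : phi2 n j (psi p) = p.2 := by
  funext k
  apply Fin.ext
  have hk := k.isLt
  have h2k1 : 2*(k : ℕ)+1 < 2*j := by omega
  rw [phi2_val (psi_subset hlt hle (le_refl n)) (psi_card hlt hle) k h2k1]
  rw [← interleave_eq_emb hlt hle ⟨2*(k : ℕ)+1, h2k1⟩]
  unfold interleave
  rw [if_neg (by simp only [Fin.val_mk]; omega)]
  have hhalf : half (⟨2*(k : ℕ)+1, h2k1⟩ : Fin (2*j)) = k :=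
    Fin.ext (show (2*(k : ℕ)+1)/2 = (k : ℕ) by omega)
  rw [hhalf]
  have := hlt k
  omega

include hlt hle in
lemma prod_psi {K : Type*} [CommRing K] (w : List K) :
    ∏ x ∈ psi p, w.getD x 0
      = ∏ k : Fin j, w.getD (2*((p.1 k : ℕ))) 0 * w.getD (2*((p.2 k : ℕ)) - 1) 0 := by
  unfold psi
  rw [Finset.prod_union (psi_disj hlt hle),
    Finset.prod_image (fun a _ b _ h => inj_s hlt hle h),
    Finset.prod_image (fun a _ b _ h => inj_t hlt hle h),
    ← Finset.prod_mul_distrib]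

end leftinv


end RhoAux

/-- Identity (4): for a sequence `w = (ω₁, …, ω_{2n})` of length `2n` and `0 ≤ j ≤ n`,
`ρ_{n-j}(ω₁,…,ω_{2n})` equals the sum over all `0 ≤ s₁ < t₁ ≤ s₂ < t₂ ≤ ⋯ ≤ s_j < t_j ≤ n`
of `∏_{k=1}^{j} ω_{2 s_k + 1} · ω_{2 t_k}` (1-indexed entries of `w`). -/
theorem rho_even_interleaved_sum {R : Type*} [CommRing R] (n j : ℕ) (hj : j ≤ n)
    (w : List R) (hw : w.length = 2 * n) :
    rho (n - j) w =
      ∑ p ∈ (Finset.univ :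
          Finset ((Fin j → Fin (n + 1)) × (Fin j → Fin (n + 1)))).filter
          (fun p => (∀ k : Fin j, (p.1 k : ℕ) < (p.2 k : ℕ)) ∧
            ∀ (k : Fin j) (h : (k : ℕ) + 1 < j), (p.2 k : ℕ) ≤ (p.1 ⟨(k : ℕ) + 1, h⟩ : ℕ)),
        ∏ k : Fin j,
          w.getD (2 * (p.1 k : ℕ)) (0 : R) * w.getD (2 * (p.2 k : ℕ) - 1) (0 : R) := by
  rw [RhoAux.rho_eq_good_sum hj w hw]
  refine Finset.sum_nbij' (fun A => (RhoAux.phi1 n j A, RhoAux.phi2 n j A)) RhoAux.psi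
    ?_ ?_ ?_ ?_ ?_
  · intro A hA
    simp only [Finset.mem_filter, Finset.mem_powersetCard] at hA
    obtain ⟨⟨hsub, hcard⟩, hgood⟩ := hA
    simp only [Finset.mem_filter, Finset.mem_univ, true_and]
    exact ⟨fun k => RhoAux.phi_cond1 hsub hcard hgood k,
      fun k h => RhoAux.phi_cond2 hsub hcard hgood k h⟩
  · intro p hp
    simp only [Finset.mem_filter, Finset.mem_univ, true_and] at hp
    obtain ⟨hlt, hle⟩ := hp
    simp only [Finset.mem_filter, Finset.mem_powersetCard]
    exact ⟨⟨RhoAux.psi_subset hlt hle (le_refl n), RhoAux.psi_card hlt hle⟩,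
      RhoAux.psi_good hlt hle⟩
  · intro A hA
    simp only [Finset.mem_filter, Finset.mem_powersetCard] at hA
    exact RhoAux.psi_phi hA.1.1 hA.1.2 hA.2
  · intro p hp
    simp only [Finset.mem_filter, Finset.mem_univ, true_and] at hp
    exact Prod.ext (RhoAux.phi_psi_1 hp.1 hp.2) (RhoAux.phi_psi_2 hp.1 hp.2)
  · intro A hA
    simp only [Finset.mem_filter, Finset.mem_powersetCard] at hA
    obtain ⟨⟨hsub, hcard⟩, hgood⟩ := hA
    calc ∏ x ∈ A, w.getD x 0
        = ∏ x ∈ RhoAux.psi (RhoAux.phi1 n j A, RhoAux.phi2 n j A), w.getD x 0 := by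
          rw [RhoAux.psi_phi hsub hcard hgood]
      _ = _ := RhoAux.prod_psi (fun k => RhoAux.phi_cond1 hsub hcard hgood k)
          (fun k h => RhoAux.phi_cond2 hsub hcard hgood k h) w
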